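/- arXiv:2511.03624 — 2 statements merged into one kernel-verified Lean document; each statement's English description precedes it below -/
import Mathlib

section
/- Let $0<r<s$ and let $u$ be continuously differentiable on an open neighborhood of the closed annulus $\{x\in\mathbb{R}^2 : r\le|x|\le s\}$. Define the circular averages $u^*(t) = \frac{1}{2\pi}\int_0^{2\pi} u(t\cos\theta, t\sin\theta)\,d\theta$ for $t\in[r,s]$. Then $\frac{1}{2}\int_{\{r<|x|<s\}} |\nabla u(x)|^2\,dx \;\ge\; \frac{\pi\,\big(u^*(s)-u^*(r)\big)^2}{\log s - \log r}$. (This is the neck energy lower bound used in the proof of the blow-up energy estimate.) -/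
open MeasureTheory Real
open scoped ContDiff RealInnerProductSpace

/-- The Euclidean plane. -/
abbrev E2 : Type := EuclideanSpace ℝ (Fin 2)

open MeasureTheory Real Set
open scoped RealInnerProductSpace


noncomputable def pe : ℝ × ℝ → E2 := fun p => (WithLp.equiv 2 (Fin 2 → ℝ)).symm ![p.1, p.2]

lemma pe_norm (p : ℝ × ℝ) : ‖pe p‖ = Real.sqrt (p.1^2 + p.2^2) := by
  simp [pe, EuclideanSpace.norm_eq, Fin.sum_univ_two, sq_abs, sq]

lemma pe_cont : Continuous pe := by
  apply Continuous.comp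
  · exact (PiLp.continuousLinearEquiv 2 ℝ (fun _ : Fin 2 => ℝ)).symm.continuous
  · exact continuous_pi fun i => by fin_cases i <;> simp <;> continuity

lemma pe_eq : pe = ⇑((MeasurableEquiv.finTwoArrow.symm).trans
    (MeasurableEquiv.toLp 2 (Fin 2 → ℝ))) := by
  ext p
  simp [pe, MeasurableEquiv.finTwoArrow, MeasurableEquiv.coe_toLp]

lemma pe_emb : MeasurableEmbedding pe := by
  rw [pe_eq]; exact MeasurableEquiv.measurableEmbedding _

lemma pe_mp : MeasurePreserving pe volume volume := by
  have h := ((EuclideanSpace.volume_preserving_symm_measurableEquiv_toLp (Fin 2)).symm).comp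
    ((volume_preserving_finTwoArrow ℝ).symm)
  rw [pe_eq]; exact h

lemma grad_inner (u : E2 → ℝ) (x v : E2) :
    fderiv ℝ u x v = ⟪gradient u x, v⟫ := by
  rw [gradient]; exact (InnerProductSpace.toDual_symm_apply).symm

lemma grad_abs_le (u : E2 → ℝ) (x v : E2) (hv : ‖v‖ = 1) :
    |fderiv ℝ u x v| ≤ ‖gradient u x‖ := by
  rw [grad_inner]
  calc |⟪gradient u x, v⟫| ≤ ‖gradient u x‖ * ‖v‖ := abs_real_inner_le_norm _ _
  _ = ‖gradient u x‖ := by rw [hv, mul_one]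
open MeasureTheory Real Set

lemma memLp2_of_compact {f : ℝ × ℝ → ℝ} {K Q : Set (ℝ × ℝ)} (hK : IsCompact K)
    (hf : ContinuousOn f K) (hQK : Q ⊆ K) (hQ : MeasurableSet Q) :
    MemLp f 2 (volume.restrict Q) := by
  haveI : IsFiniteMeasure (volume.restrict Q) := by
    constructor
    rw [Measure.restrict_apply_univ]
    exact lt_of_le_of_lt (measure_mono hQK) hK.measure_lt_top
  obtain ⟨C, hC⟩ := hK.exists_bound_of_continuousOn hf
  refine MemLp.of_bound ((hf.mono hQK).aestronglyMeasurable hQ) C ?_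
  rw [ae_restrict_iff' hQ]
  exact ae_of_all _ fun x hx => hC x (hQK hx)

lemma cs_integral {α : Type*} [MeasurableSpace α] (μ : Measure α) (f g : α → ℝ)
    (hf : MemLp f 2 μ) (hg : MemLp g 2 μ) :
    (∫ x, f x * g x ∂μ) ^ 2 ≤ (∫ x, f x ^ 2 ∂μ) * (∫ x, g x ^ 2 ∂μ) := by
  have h2 : (2 : ℝ).HolderConjugate 2 := Real.HolderConjugate.two_two
  have hof : (ENNReal.ofReal (2:ℝ)) = 2 := by norm_num
  have habs : ∀ h : α → ℝ, MemLp h 2 μ → MemLp (fun x => |h x|) (ENNReal.ofReal (2:ℝ)) μ := by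
    intro h hh
    rw [hof]
    exact hh.abs
  have key := integral_mul_le_Lp_mul_Lq_of_nonneg h2
    (ae_of_all μ fun x => abs_nonneg (f x)) (ae_of_all μ fun x => abs_nonneg (g x))
    (habs f hf) (habs g hg)
  have e1 : ∫ x, |f x| ^ (2:ℝ) ∂μ = ∫ x, f x ^ 2 ∂μ := by
    apply integral_congr_ae; apply ae_of_all; intro x
    simp only [Real.rpow_two, sq_abs]
  have e2 : ∫ x, |g x| ^ (2:ℝ) ∂μ = ∫ x, g x ^ 2 ∂μ := by
    apply integral_congr_ae; apply ae_of_all; intro x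
    simp only [Real.rpow_two, sq_abs]
  rw [e1, e2] at key
  have hA : 0 ≤ ∫ x, f x ^ 2 ∂μ := integral_nonneg fun x => sq_nonneg _
  have hB : 0 ≤ ∫ x, g x ^ 2 ∂μ := integral_nonneg fun x => sq_nonneg _
  have h1 : |∫ x, f x * g x ∂μ| ≤ ∫ x, |f x| * |g x| ∂μ := by
    simpa [Real.norm_eq_abs, abs_mul] using
      norm_integral_le_integral_norm (μ := μ) (fun x => f x * g x)
  have h3 : (∫ x, f x * g x ∂μ) ^ 2 ≤ (∫ x, |f x| * |g x| ∂μ) ^ 2 := by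
    rw [← sq_abs (∫ x, f x * g x ∂μ)]
    exact pow_le_pow_left₀ (abs_nonneg _) h1 2
  refine h3.trans ?_
  have h4 : (∫ x, |f x| * |g x| ∂μ) ^ 2 ≤
      ((∫ x, f x ^ 2 ∂μ) ^ ((1:ℝ)/2) * (∫ x, g x ^ 2 ∂μ) ^ ((1:ℝ)/2)) ^ 2 := by
    apply pow_le_pow_left₀ (integral_nonneg fun x => mul_nonneg (abs_nonneg _) (abs_nonneg _)) key
  refine h4.trans_eq ?_
  rw [mul_pow, ← Real.rpow_natCast ((∫ x, f x ^ 2 ∂μ) ^ ((1:ℝ)/2)) 2,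
    ← Real.rpow_natCast ((∫ x, g x ^ 2 ∂μ) ^ ((1:ℝ)/2)) 2,
    ← Real.rpow_mul hA, ← Real.rpow_mul hB]
  norm_num

/-- The Euclidean Laplacian on the plane:
`Δ f = ∂²f/∂x₁² + ∂²f/∂x₂²`. -/
noncomputable def laplacian2 (f : E2 → ℝ) (x : E2) : ℝ :=
  ∑ i : Fin 2,
    fderiv ℝ (fun y => fderiv ℝ f y (EuclideanSpace.single i 1)) x (EuclideanSpace.single i 1)

theorem stmt7 (r s : ℝ) (hr : 0 < r) (hrs : r < s)
    (u : E2 → ℝ) (U : Set E2) (hU : IsOpen U)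
    (hsub : {x : E2 | r ≤ ‖x‖ ∧ ‖x‖ ≤ s} ⊆ U)
    (hu : ContDiffOn ℝ 1 u U)
    (ustar : ℝ → ℝ)
    (hustar : ∀ t : ℝ, ustar t =
      (1 / (2 * π)) * ∫ θ in (0 : ℝ)..(2 * π),
        u ((WithLp.equiv 2 (Fin 2 → ℝ)).symm ![t * Real.cos θ, t * Real.sin θ])) :
    π * (ustar s - ustar r) ^ 2 / (Real.log s - Real.log r) ≤
      (1 / 2) * ∫ x in {x : E2 | r < ‖x‖ ∧ ‖x‖ < s}, ‖gradient u x‖ ^ 2 := by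

  have hπ : 0 < π := Real.pi_pos
  have hs : 0 < s := hr.trans hrs
  set c : ℝ × ℝ → E2 := fun p => pe (p.1 * Real.cos p.2, p.1 * Real.sin p.2) with hcdef
  set v : ℝ → E2 := fun θ => pe (Real.cos θ, Real.sin θ) with hvdef
  set g : ℝ × ℝ → ℝ := fun p => fderiv ℝ u (c p) (v p.2) with hgdef
  set K : Set (ℝ × ℝ) := Icc r s ×ˢ Icc (-π) π with hKdef
  set Q : Set (ℝ × ℝ) := Ioo r s ×ˢ Ioo (-π) π with hQdef
  set A : Set E2 := {x : E2 | r < ‖x‖ ∧ ‖x‖ < s} with hAdef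
  -- basic geometry
  have hvnorm : ∀ θ, ‖v θ‖ = 1 := by
    intro θ
    rw [hvdef, pe_norm]
    simp [Real.cos_sq_add_sin_sq]
  have hcnorm : ∀ t θ : ℝ, 0 ≤ t → ‖c (t, θ)‖ = t := by
    intro t θ ht
    rw [hcdef, pe_norm]
    simp only [mul_pow]
    rw [← mul_add, Real.cos_sq_add_sin_sq, mul_one, Real.sqrt_sq ht]
  have hcU : ∀ t θ : ℝ, t ∈ Icc r s → c (t, θ) ∈ U := by
    intro t θ ht
    apply hsub
    constructor <;> rw [hcnorm t θ (hr.le.trans ht.1)]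
    exacts [ht.1, ht.2]
  have hdiff : ∀ t θ : ℝ, t ∈ Icc r s → DifferentiableAt ℝ u (c (t, θ)) := fun t θ ht =>
    (hu.contDiffAt (hU.mem_nhds (hcU t θ ht))).differentiableAt one_ne_zero
  have hfc : ContinuousOn (fderiv ℝ u) U := hu.continuousOn_fderiv_of_isOpen hU le_rfl
  have hgradc : ContinuousOn (gradient u) U := by
    have : Continuous (⇑(InnerProductSpace.toDual ℝ E2).symm) :=
      (InnerProductSpace.toDual ℝ E2).symm.continuous
    exact this.comp_continuousOn hfc
  have hccont : Continuous c := by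
    apply pe_cont.comp
    exact (continuous_fst.mul (Real.continuous_cos.comp continuous_snd)).prodMk
      (continuous_fst.mul (Real.continuous_sin.comp continuous_snd))
  have hvcont : Continuous v := by
    apply pe_cont.comp
    exact Real.continuous_cos.prodMk Real.continuous_sin
  have hKmaps : ∀ p ∈ K, c p ∈ U := by
    rintro ⟨t, θ⟩ hp
    exact hcU t θ hp.1
  have hgK : ContinuousOn g K := by
    apply ContinuousOn.clm_apply
    · exact hfc.comp hccont.continuousOn hKmaps
    · exact (hvcont.comp continuous_snd).continuousOn
  have hGK : ContinuousOn (fun p => ‖gradient u (c p)‖) K :=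
    ((hgradc.comp hccont.continuousOn hKmaps).norm)
  have hKcomp : IsCompact K := isCompact_Icc.prod isCompact_Icc
  have hQK : Q ⊆ K := prod_mono Ioo_subset_Icc_self Ioo_subset_Icc_self
  have hQmeas : MeasurableSet Q := measurableSet_Ioo.prod measurableSet_Ioo
  -- the derivative along rays
  have hderiv : ∀ θ : ℝ, ∀ t ∈ Icc r s,
      HasDerivAt (fun t' => u (c (t', θ))) (g (t, θ)) t := by
    intro θ t ht
    have hsm : ∀ t' : ℝ, c (t', θ) = t' • v θ := by
      intro t'
      show pe (t' * Real.cos θ, t' * Real.sin θ) = t' • pe (Real.cos θ, Real.sin θ)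
      rw [pe, pe]
      show (WithLp.equiv 2 (Fin 2 → ℝ)).symm ![t' * Real.cos θ, t' * Real.sin θ] = _
      have hv : ![t' * Real.cos θ, t' * Real.sin θ] = t' • ![Real.cos θ, Real.sin θ] := by
        ext i; fin_cases i <;> simp
      rw [hv]; rfl
    have h1 : HasDerivAt (fun t' : ℝ => t' • v θ) (v θ) t := by
      simpa using (hasDerivAt_id t).smul_const (v θ)
    have h2 : HasDerivAt (fun t' : ℝ => c (t', θ)) (v θ) t := by
      simp_rw [hsm]; exact h1
    have h3 := ((hdiff t θ ht).hasFDerivAt).comp_hasDerivAt t h2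
    exact h3
  -- FTC along rays
  have hFTC : ∀ θ ∈ Icc (-π) π, (∫ t in r..s, g (t, θ)) = u (c (s, θ)) - u (c (r, θ)) := by
    intro θ hθ
    apply intervalIntegral.integral_eq_sub_of_hasDerivAt
    · intro t ht
      rw [uIcc_of_le hrs.le] at ht
      exact hderiv θ t ht
    · apply ContinuousOn.intervalIntegrable
      rw [uIcc_of_le hrs.le]
      have : MapsTo (fun t : ℝ => (t, θ)) (Icc r s) K := by
        intro t ht; exact ⟨ht, hθ⟩
      exact hgK.comp ((continuous_id.prodMk continuous_const).continuousOn) this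
  -- integrability of g on Q
  have hgInt : IntegrableOn g Q := (hgK.integrableOn_compact hKcomp).mono_set hQK
  have hmeq : volume.restrict Q
      = (volume.restrict (Ioo r s)).prod (volume.restrict (Ioo (-π) π)) := by
    rw [hQdef, Measure.prod_restrict, ← Measure.volume_eq_prod]
  have hnegpi : (-π : ℝ) ≤ π := by linarith
  -- the circular average identity
  have hkey : ∀ t0 ∈ Icc r s, (∫ θ in Ioo (-π) π, u (c (t0, θ))) = 2 * π * ustar t0 := by
    intro t0 ht0
    have hcont : Continuous fun θ => u (c (t0, θ)) :=
      hu.continuousOn.comp_continuous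
        (hccont.comp (continuous_const.prodMk continuous_id))
        (fun θ => hcU t0 θ ht0)
    have hper : Function.Periodic (fun θ => u (c (t0, θ))) (2 * π) := by
      intro θ
      have : c (t0, θ + 2 * π) = c (t0, θ) := by
        simp only [hcdef]
        rw [Real.cos_add_two_pi, Real.sin_add_two_pi]
      show u (c (t0, θ + 2 * π)) = u (c (t0, θ))
      rw [this]
    have h1 : (∫ θ in Ioo (-π) π, u (c (t0, θ))) = ∫ θ in (-π)..π, u (c (t0, θ)) := by
      rw [intervalIntegral.integral_of_le hnegpi, integral_Ioc_eq_integral_Ioo]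
    have h2 := hper.intervalIntegral_add_eq 0 (-π)
    rw [zero_add, show -π + 2*π = π by ring] at h2
    have h3 : (∫ θ in (0:ℝ)..(2*π),
        u ((WithLp.equiv 2 (Fin 2 → ℝ)).symm ![t0 * Real.cos θ, t0 * Real.sin θ]))
        = ∫ θ in (0:ℝ)..(2*π), u (c (t0, θ)) := rfl
    rw [h1, ← h2, hustar t0, h3]
    field_simp
  -- Step B : the double integral of g equals 2π (u*(s) - u*(r))
  have hB : (∫ p in Q, g p) = 2 * π * (ustar s - ustar r) := by
    have hint : Integrable g
        ((volume.restrict (Ioo r s)).prod (volume.restrict (Ioo (-π) π))) := by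
      rw [← hmeq]; exact hgInt
    have hintcs : ∀ t0 ∈ Icc r s, IntegrableOn (fun θ => u (c (t0, θ))) (Ioo (-π) π) := by
      intro t0 ht0
      have hcont : Continuous fun θ => u (c (t0, θ)) :=
        hu.continuousOn.comp_continuous
          (hccont.comp (continuous_const.prodMk continuous_id))
          (fun θ => hcU t0 θ ht0)
      exact (hcont.integrableOn_Icc).mono_set Ioo_subset_Icc_self
    calc ∫ p in Q, g p
        = ∫ p, g p ∂((volume.restrict (Ioo r s)).prod (volume.restrict (Ioo (-π) π))) := by
          rw [← hmeq]
      _ = ∫ t in Ioo r s, ∫ θ in Ioo (-π) π, g (t, θ) := integral_prod _ hint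
      _ = ∫ θ in Ioo (-π) π, ∫ t in Ioo r s, g (t, θ) := integral_integral_swap hint
      _ = ∫ θ in Ioo (-π) π, (u (c (s, θ)) - u (c (r, θ))) := by
          apply setIntegral_congr_fun measurableSet_Ioo
          intro θ hθ
          have he : (∫ t in Ioo r s, g (t, θ)) = ∫ t in r..s, g (t, θ) := by
            rw [intervalIntegral.integral_of_le hrs.le, integral_Ioc_eq_integral_Ioo]
          calc (∫ t in Ioo r s, g (t, θ)) = ∫ t in r..s, g (t, θ) := he
            _ = u (c (s, θ)) - u (c (r, θ)) := hFTC θ (Ioo_subset_Icc_self hθ)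
      _ = (∫ θ in Ioo (-π) π, u (c (s, θ))) - ∫ θ in Ioo (-π) π, u (c (r, θ)) :=
          integral_sub (hintcs s ⟨hrs.le, le_refl s⟩) (hintcs r ⟨le_refl r, hrs.le⟩)
      _ = 2 * π * (ustar s - ustar r) := by
          rw [hkey s ⟨hrs.le, le_refl s⟩, hkey r ⟨le_refl r, hrs.le⟩]
          ring
  -- Cauchy-Schwarz setup
  have hpos : ∀ p ∈ Q, 0 < p.1 := fun p hp => lt_trans hr hp.1.1
  set f1 : ℝ × ℝ → ℝ := fun p => (Real.sqrt p.1)⁻¹ with hf1def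
  set f2 : ℝ × ℝ → ℝ := fun p => Real.sqrt p.1 * g p with hf2def
  have hf1K : ContinuousOn f1 K := by
    apply ContinuousOn.inv₀
    · exact (Real.continuous_sqrt.comp continuous_fst).continuousOn
    · rintro ⟨t, θ⟩ hp
      exact (Real.sqrt_pos.mpr (lt_of_lt_of_le hr hp.1.1)).ne'
  have hf2K : ContinuousOn f2 K :=
    ((Real.continuous_sqrt.comp continuous_fst).continuousOn).mul hgK
  have hcs := cs_integral (volume.restrict Q) f1 f2
    (memLp2_of_compact hKcomp hf1K hQK hQmeas)
    (memLp2_of_compact hKcomp hf2K hQK hQmeas)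
  have e0 : (∫ p in Q, f1 p * f2 p) = ∫ p in Q, g p := by
    apply setIntegral_congr_fun hQmeas
    intro p hp
    have h0 : Real.sqrt p.1 ≠ 0 := (Real.sqrt_pos.mpr (hpos p hp)).ne'
    show (Real.sqrt p.1)⁻¹ * (Real.sqrt p.1 * g p) = g p
    field_simp
  have e1 : (∫ p in Q, f1 p ^ 2) = ∫ p in Q, (p.1)⁻¹ := by
    apply setIntegral_congr_fun hQmeas
    intro p hp
    show ((Real.sqrt p.1)⁻¹) ^ 2 = (p.1)⁻¹
    rw [inv_pow, Real.sq_sqrt (hpos p hp).le]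
  have e2 : (∫ p in Q, f2 p ^ 2) = ∫ p in Q, p.1 * g p ^ 2 := by
    apply setIntegral_congr_fun hQmeas
    intro p hp
    show (Real.sqrt p.1 * g p) ^ 2 = p.1 * g p ^ 2
    rw [mul_pow, Real.sq_sqrt (hpos p hp).le]
  have e3 : (∫ p in Q, (p.1 : ℝ)⁻¹) = (Real.log s - Real.log r) * (2 * π) := by
    rw [hmeq]
    have hpm := integral_prod_mul (μ := volume.restrict (Ioo r s))
      (ν := volume.restrict (Ioo (-π) π)) (fun t : ℝ => t⁻¹) (fun _ : ℝ => (1:ℝ))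
    simp only [mul_one] at hpm
    rw [hpm]
    have ht : (∫ t in Ioo r s, t⁻¹) = Real.log s - Real.log r := by
      rw [← integral_Ioc_eq_integral_Ioo, ← intervalIntegral.integral_of_le hrs.le,
        integral_inv_of_pos hr hs, Real.log_div hs.ne' hr.ne']
    have hone : (∫ _θ in Ioo (-π) π, (1:ℝ)) = 2 * π := by
      simp only [integral_const, smul_eq_mul, mul_one, measureReal_def, Measure.restrict_apply_univ,
        Real.volume_Ioo]
      rw [ENNReal.toReal_ofReal (by linarith)]
      ring
    rw [ht, hone]
  have hCS : (∫ p in Q, g p) ^ 2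
      ≤ ((Real.log s - Real.log r) * (2 * π)) * ∫ p in Q, p.1 * g p ^ 2 := by
    rw [e0, e1, e2, e3] at hcs
    exact hcs
  -- bound g² by the gradient norm squared
  have hmono : (∫ p in Q, p.1 * g p ^ 2) ≤ ∫ p in Q, p.1 * ‖gradient u (c p)‖ ^ 2 := by
    apply setIntegral_mono_on
    · exact ((continuous_fst.continuousOn.mul (hgK.pow 2)).integrableOn_compact
        hKcomp).mono_set hQK
    · exact ((continuous_fst.continuousOn.mul (hGK.pow 2)).integrableOn_compact
        hKcomp).mono_set hQK
    · exact hQmeas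
    · intro p hp
      apply mul_le_mul_of_nonneg_left _ (hpos p hp).le
      calc g p ^ 2 = |g p| ^ 2 := (sq_abs _).symm
        _ ≤ ‖gradient u (c p)‖ ^ 2 :=
          pow_le_pow_left₀ (abs_nonneg _) (grad_abs_le u (c p) (v p.2) (hvnorm p.2)) 2
  -- polar coordinates
  have hAopen : IsOpen A := by
    have : A = (fun x : E2 => ‖x‖) ⁻¹' (Ioo r s) := by
      ext x; exact Iff.rfl
    rw [this]
    exact isOpen_Ioo.preimage continuous_norm
  have hpolar : (∫ p in Q, p.1 * ‖gradient u (c p)‖ ^ 2)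
      = ∫ x in A, ‖gradient u x‖ ^ 2 := by
    set B : Set (ℝ × ℝ) := pe ⁻¹' A with hBdef
    have hBmeas : MeasurableSet B := (hAopen.preimage pe_cont).measurableSet
    have h1 : (∫ x in A, ‖gradient u x‖ ^ 2) = ∫ q in B, ‖gradient u (pe q)‖ ^ 2 :=
      (pe_mp.setIntegral_preimage_emb pe_emb _ _).symm
    have h2 := integral_comp_polarCoord_symm
      (B.indicator (fun q => ‖gradient u (pe q)‖ ^ 2))
    rw [integral_indicator hBmeas] at h2
    have h3 : ∀ p ∈ polarCoord.target,
        p.1 • (B.indicator (fun q => ‖gradient u (pe q)‖ ^ 2) (polarCoord.symm p))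
        = (Ioo r s ×ˢ (univ : Set ℝ)).indicator
            (fun p : ℝ × ℝ => p.1 * ‖gradient u (c p)‖ ^ 2) p := by
      intro p hp
      have hp1 : 0 < p.1 := hp.1
      have hnorm : ‖pe (polarCoord.symm p)‖ = p.1 := by
        rw [polarCoord_symm_apply, pe_norm]
        simp only [mul_pow]
        rw [← mul_add, Real.cos_sq_add_sin_sq, mul_one, Real.sqrt_sq hp1.le]
      have hceq : pe (polarCoord.symm p) = c p := by
        rw [polarCoord_symm_apply]
      by_cases hmem : r < p.1 ∧ p.1 < s
      · rw [Set.indicator_of_mem, Set.indicator_of_mem]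
        · rw [hceq, smul_eq_mul]
        · exact ⟨hmem, mem_univ _⟩
        · show pe (polarCoord.symm p) ∈ A
          rw [hAdef]
          exact ⟨by rw [hnorm]; exact hmem.1, by rw [hnorm]; exact hmem.2⟩
      · rw [Set.indicator_of_notMem, Set.indicator_of_notMem]
        · simp
        · intro h; exact hmem ⟨h.1.1, h.1.2⟩
        · intro h
          apply hmem
          have hA2 : pe (polarCoord.symm p) ∈ A := h
          rw [hAdef] at hA2
          simp only [Set.mem_setOf_eq] at hA2
          rw [hnorm] at hA2
          exact hA2
    rw [setIntegral_congr_fun polarCoord.open_target.measurableSet h3,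
      setIntegral_indicator (measurableSet_Ioo.prod MeasurableSet.univ)] at h2
    have h4 : polarCoord.target ∩ (Ioo r s ×ˢ (univ : Set ℝ)) = Q := by
      rw [polarCoord_target, prod_inter_prod, inter_univ, hQdef]
      congr 1
      exact inter_eq_self_of_subset_right (fun x hx => lt_trans hr hx.1)
    rw [h4] at h2
    rw [h1, ← h2]
  -- final arithmetic
  have hL : 0 < Real.log s - Real.log r := sub_pos.mpr (Real.log_lt_log hr hrs)
  have hEg : 0 ≤ ∫ x in A, ‖gradient u x‖ ^ 2 :=
    integral_nonneg fun x => sq_nonneg _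
  have key : (2 * π * (ustar s - ustar r)) ^ 2
      ≤ ((Real.log s - Real.log r) * (2 * π)) * ∫ x in A, ‖gradient u x‖ ^ 2 := by
    rw [← hB]
    refine hCS.trans ?_
    apply mul_le_mul_of_nonneg_left (hmono.trans_eq hpolar)
    positivity
  rw [div_le_iff₀ hL]
  nlinarith [key, hπ, sq_nonneg (ustar s - ustar r), mul_nonneg hL.le hEg]
end

section
/- There is no function $v:\mathbb{R}^2\to\mathbb{R}$ that is harmonic on all of $\mathbb{R}^2$ (twice continuously differentiable with $\Delta v \equiv 0$) and satisfies $\int_{\mathbb{R}^2} e^{v(x)}\,dx < \infty$. (Used in the blow-up analysis to derive a contradiction when the limiting equation degenerates to a harmonic one.) -/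
open MeasureTheory Real
open scoped ContDiff RealInnerProductSpace

section Aux

open Complex Metric Set intervalIntegral ContinuousLinearMap

lemma circleMap_eq' (r θ : ℝ) : circleMap 0 r θ = ↑(r * Real.cos θ) + ↑(r * Real.sin θ) * I := by
  simp [circleMap, Complex.exp_mul_I]
  ring

lemma submean (g : ℂ → ℂ) (hg : Differentiable ℂ g) {r : ℝ} (hr : 0 < r) :
    2 * π * ‖g 0‖ ≤ ∫ θ in (0:ℝ)..(2*π), ‖g (circleMap 0 r θ)‖ := by
  have h0 : (0:ℂ) ∈ ball (0:ℂ) r := by simpa using hr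
  have hc := Complex.two_pi_I_inv_smul_circleIntegral_sub_inv_smul_of_differentiable_on_off_countable
    (s := (∅ : Set ℂ)) Set.countable_empty h0 (hg.continuous.continuousOn)
    (fun z hz => (hg z))
  have hcirc : (∮ z in C(0, r), (z - 0)⁻¹ • g z)
      = I * ∫ θ in (0:ℝ)..(2*π), g (circleMap 0 r θ) := by
    rw [circleIntegral]
    rw [← intervalIntegral.integral_const_mul]
    apply intervalIntegral.integral_congr
    intro θ _
    have hne : circleMap 0 r θ ≠ 0 := by
      intro h
      have := congrArg (fun z : ℂ => ‖z‖) h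
      simp only [norm_circleMap_zero, norm_zero, abs_eq_zero] at this
      linarith
    show deriv (circleMap 0 r) θ • (circleMap 0 r θ - 0)⁻¹ • g (circleMap 0 r θ)
        = I * g (circleMap 0 r θ)
    rw [deriv_circleMap]
    simp only [sub_zero, smul_eq_mul]
    field_simp
  rw [hcirc] at hc
  have hkey : g 0 = (2*π : ℂ)⁻¹ * ∫ θ in (0:ℝ)..(2*π), g (circleMap 0 r θ) := by
    rw [← hc]
    simp only [smul_eq_mul]
    have hπ : (π:ℂ) ≠ 0 := by exact_mod_cast Real.pi_ne_zero
    field_simp [Complex.I_ne_zero]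
  have hb := intervalIntegral.norm_integral_le_integral_norm
    (f := fun θ => g (circleMap 0 r θ)) (a := 0) (b := 2*π) (μ := volume) (by positivity)
  have hnn : ‖(2*(π:ℂ))⁻¹‖ = (2*π)⁻¹ := by
    rw [norm_inv]
    have : (2*(π:ℂ)) = ((2*π : ℝ) : ℂ) := by push_cast; ring
    rw [this, Complex.norm_real, Real.norm_eq_abs, abs_of_pos (by positivity)]
  calc 2 * π * ‖g 0‖ = ‖∫ θ in (0:ℝ)..(2*π), g (circleMap 0 r θ)‖ := by
        rw [hkey, norm_mul, hnn, ← mul_assoc, mul_inv_cancel₀ (by positivity), one_mul]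
    _ ≤ _ := hb

lemma entire_zero (g : ℂ → ℂ) (hg : Differentiable ℂ g)
    (hi : Integrable fun z => ‖g z‖) : g 0 = 0 := by
  by_contra hne
  set c := ‖g 0‖ with hcdef
  have hc : 0 < c := norm_pos_iff.2 hne
  set m : ℝ × ℝ → ℝ := fun q => ‖g (↑q.1 + ↑q.2 * I)‖ with hmdef
  have hm : Integrable m := by
    have h := Complex.volume_preserving_equiv_real_prod.symm
    have h2 := (h.integrable_comp_emb Complex.measurableEquivRealProd.symm.measurableEmbedding).2 hi
    have h3 : (fun q : ℝ×ℝ => ‖g (↑q.1 + ↑q.2 * I)‖)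
        = (fun z => ‖g z‖) ∘ ⇑Complex.measurableEquivRealProd.symm := by
      funext q
      simp only [Function.comp_apply]
      congr 1
      rw [Complex.measurableEquivRealProd_symm_apply, Complex.mk_eq_add_mul_I]
    rw [hmdef, h3]
    exact h2
  set V : ℝ × ℝ → ℝ := fun p => p.1 • m (polarCoord.symm p) with hVdef
  have htarget : (polarCoord.target : Set (ℝ×ℝ)) = Ioi 0 ×ˢ Ioo (-π) π := rfl
  -- integrability on the polar target
  have hVt : IntegrableOn V polarCoord.target := by
    have habs : IntegrableOn (fun p : ℝ × ℝ => |p.1| • m (polarCoord.symm p)) polarCoord.target := by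
      set B : ℝ × ℝ → ℝ × ℝ →L[ℝ] ℝ × ℝ := fun p =>
        LinearMap.toContinuousLinearMap (Matrix.toLin (Module.Basis.finTwoProd ℝ) (Module.Basis.finTwoProd ℝ)
          !![Real.cos p.2, -p.1 * Real.sin p.2; Real.sin p.2, p.1 * Real.cos p.2])
      have A : ∀ p ∈ polarCoord.target, HasFDerivWithinAt polarCoord.symm (B p) polarCoord.target p :=
        fun p _ => (hasFDerivAt_polarCoord_symm p).hasFDerivWithinAt
      have B_det : ∀ p, (B p).det = p.1 := by
        intro p
        conv_rhs => rw [← one_mul p.1, ← Real.cos_sq_add_sin_sq p.2]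
        simp only [B, neg_mul, LinearMap.det_toContinuousLinearMap, LinearMap.det_toLin,
          Matrix.det_fin_two_of, sub_neg_eq_add]
        ring
      have h := (integrableOn_image_iff_integrableOn_abs_det_fderiv_smul volume
        polarCoord.open_target.measurableSet A polarCoord.symm.injOn m).1 ?_
      · convert h using 2 with p
        rw [B_det]
      · rw [polarCoord.symm_image_target_eq_source]
        exact hm.integrableOn
    apply habs.congr_fun ?_ polarCoord.open_target.measurableSet
    intro p hp
    rw [htarget] at hp
    simp only [V, abs_of_pos (mem_Ioi.1 hp.1)]
  have hA0 : 0 ≤ ∫ q, m q := integral_nonneg fun q => norm_nonneg _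
  set A : ℝ := ∫ q, m q with hAdef
  have hpolar : ∫ p in polarCoord.target, V p = A := integral_comp_polarCoord_symm m
  -- circle version of m
  have hmc : ∀ r θ : ℝ, m (polarCoord.symm (r, θ)) = ‖g (circleMap 0 r θ)‖ := by
    intro r θ
    rw [polarCoord_symm_apply]
    simp only [m]
    rw [circleMap_eq' r θ]
  -- inner bound
  have hinner : ∀ r : ℝ, 0 < r → 2*π*c ≤ ∫ θ in Ioo (-π) π, m (polarCoord.symm (r, θ)) := by
    intro r hr
    have hre : ∫ θ in Ioo (-π) π, m (polarCoord.symm (r, θ))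
        = ∫ θ in (0:ℝ)..(2*π), ‖g (circleMap 0 r θ)‖ := by
      simp_rw [hmc r]
      rw [← integral_Ioc_eq_integral_Ioo,
        ← intervalIntegral.integral_of_le (by linarith [pi_pos] : -π ≤ π)]
      have hper : Function.Periodic (fun θ : ℝ => ‖g (circleMap 0 r θ)‖) (2*π) :=
        fun x => congrArg (fun z => ‖g z‖) (periodic_circleMap 0 r x)
      have h2 := hper.intervalIntegral_add_eq (-π) 0
      have he : -π + 2*π = π := by ring
      rw [he] at h2
      rw [h2, zero_add]
    rw [hre]
    exact submean g hg hr
  -- main bound: for all R > 0, π c R² ≤ A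
  have hmain : ∀ R : ℝ, 0 < R → π * c * R^2 ≤ A := by
    intro R hR
    set box : Set (ℝ × ℝ) := Ioc 0 R ×ˢ Ioo (-π) π with hboxdef
    have hsub : box ⊆ polarCoord.target := by
      rw [htarget]
      exact prod_mono Ioc_subset_Ioi_self subset_rfl
    have hVbox : IntegrableOn V box := hVt.mono_set hsub
    have h1 : ∫ p in box, V p ≤ ∫ p in polarCoord.target, V p := by
      apply setIntegral_mono_set hVt ?_ (HasSubset.Subset.eventuallyLE hsub)
      apply ae_restrict_of_forall_mem polarCoord.open_target.measurableSet
      intro p hp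
      rw [htarget] at hp
      exact mul_nonneg (le_of_lt (mem_Ioi.1 hp.1)) (norm_nonneg _)
    have hVbox' : Integrable V ((volume.restrict (Ioc 0 R)).prod (volume.restrict (Ioo (-π) π))) := by
      rwa [Measure.prod_restrict, ← Measure.volume_eq_prod]
    have h2 : ∫ p in box, V p = ∫ r in Ioc 0 R, ∫ θ in Ioo (-π) π, V (r, θ) := by
      rw [hboxdef, Measure.volume_eq_prod, setIntegral_prod _ ?_]
      rwa [Measure.volume_eq_prod] at hVbox
    have h3 : ∫ r in Ioc 0 R, (2*π*c*r) ≤ ∫ r in Ioc 0 R, ∫ θ in Ioo (-π) π, V (r, θ) := by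
      apply setIntegral_mono_on
      · exact (continuous_const.mul continuous_id).integrableOn_Ioc
      · exact hVbox'.integral_prod_left
      · exact measurableSet_Ioc
      · intro r hr
        have hr0 : 0 < r := hr.1
        have : ∫ θ in Ioo (-π) π, V (r, θ) = r * ∫ θ in Ioo (-π) π, m (polarCoord.symm (r, θ)) := by
          simp_rw [V]
          rw [MeasureTheory.integral_smul]
          simp
        rw [this]
        calc 2*π*c*r = r * (2*π*c) := by ring
          _ ≤ r * ∫ θ in Ioo (-π) π, m (polarCoord.symm (r, θ)) :=
            mul_le_mul_of_nonneg_left (hinner r hr0) hr0.le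
    have h4 : ∫ r in Ioc 0 R, (2*π*c*r) = π * c * R^2 := by
      rw [← intervalIntegral.integral_of_le hR.le]
      rw [intervalIntegral.integral_const_mul, integral_id]
      ring
    calc π * c * R^2 = ∫ r in Ioc 0 R, (2*π*c*r) := h4.symm
      _ ≤ ∫ p in box, V p := by rw [h2]; exact h3
      _ ≤ ∫ p in polarCoord.target, V p := h1
      _ = A := hpolar
  -- contradiction
  set R := Real.sqrt ((A+1)/(π*c)) with hRdef
  have hR : 0 < R := Real.sqrt_pos.2 (div_pos (by linarith) (by positivity))
  have := hmain R hR
  rw [hRdef, Real.sq_sqrt (le_of_lt (div_pos (by linarith) (by positivity)))] at this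
  have heq : π * c * ((A+1)/(π*c)) = A + 1 := by field_simp
  rw [heq] at this
  linarith

lemma exists_holo (u : ℂ → ℝ) (hu : ContDiff ℝ 2 u)
    (harm : ∀ z, fderiv ℝ (fun y => fderiv ℝ u y 1) z 1
      + fderiv ℝ (fun y => fderiv ℝ u y I) z I = 0) :
    ∃ f f' : ℂ → ℂ, Continuous f' ∧ (∀ z, HasDerivAt f (f' z) z) ∧
      ∀ z, f z = ↑(fderiv ℝ u z 1) - ↑(fderiv ℝ u z I) * I := by
  have hdu : ContDiff ℝ 1 (fderiv ℝ u) := hu.fderiv_right (by norm_num)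
  have hduD : Differentiable ℝ (fderiv ℝ u) := hdu.differentiable one_ne_zero
  set R : ℂ → ℂ →L[ℝ] ℂ →L[ℝ] ℝ := fderiv ℝ (fderiv ℝ u) with hRdef
  have hRz : ∀ z, HasFDerivAt (fderiv ℝ u) (R z) z := fun z => (hduD z).hasFDerivAt
  have hRcont : Continuous R := hdu.continuous_fderiv one_ne_zero
  have hsymm : ∀ z v w, R z v w = R z w v := fun z v w =>
    second_derivative_symmetric (fun y => (hu.differentiable (by norm_num) y).hasFDerivAt)
      (hRz z) v w
  -- partial derivative functions
  have happ : ∀ (w : ℂ) (z : ℂ), HasFDerivAt (fun y => fderiv ℝ u y w)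
      ((ContinuousLinearMap.apply ℝ ℝ w).comp (R z)) z := fun w z =>
    (ContinuousLinearMap.apply ℝ ℝ w).hasFDerivAt.comp z (hRz z)
  have hsecond : ∀ (w w' : ℂ) (z : ℂ), fderiv ℝ (fun y => fderiv ℝ u y w) z w' = R z w' w :=
    fun w w' z => by rw [(happ w z).fderiv]; rfl
  -- harmonicity in terms of R
  have harm' : ∀ z, R z I I = - R z 1 1 := by
    intro z
    have := harm z
    rw [hsecond 1 1 z, hsecond I I z] at this
    linarith
  set f : ℂ → ℂ := fun z => ↑(fderiv ℝ u z 1) - ↑(fderiv ℝ u z I) * I with hfdef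
  set f' : ℂ → ℂ := fun z => ↑(R z 1 1) - ↑(R z 1 I) * I with hf'def
  refine ⟨f, f', ?_, ?_, fun z => rfl⟩
  · apply Continuous.sub
    · exact Complex.continuous_ofReal.comp ((hRcont.clm_apply continuous_const).clm_apply
        continuous_const)
    · exact (Complex.continuous_ofReal.comp ((hRcont.clm_apply continuous_const).clm_apply
        continuous_const)).mul continuous_const
  · intro z
    -- real Fréchet derivative of f
    have h1 : HasFDerivAt (fun y => (↑(fderiv ℝ u y 1) : ℂ))
        (Complex.ofRealCLM.comp ((ContinuousLinearMap.apply ℝ ℝ 1).comp (R z))) z :=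
      Complex.ofRealCLM.hasFDerivAt.comp z (happ 1 z)
    have h2 : HasFDerivAt (fun y => (fderiv ℝ u y I) • (I:ℂ))
        (((ContinuousLinearMap.apply ℝ ℝ I).comp (R z)).smulRight I) z :=
      (happ I z).smul_const I
    have hfeq : f = fun y => (↑(fderiv ℝ u y 1) : ℂ) - (fderiv ℝ u y I) • (I:ℂ) := by
      funext y
      rw [hfdef]
      simp [Complex.real_smul]
    have hre : HasFDerivAt f
        ((Complex.ofRealCLM.comp ((ContinuousLinearMap.apply ℝ ℝ 1).comp (R z)))
          - (((ContinuousLinearMap.apply ℝ ℝ I).comp (R z)).smulRight I)) z := by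
      rw [hfeq]; exact h1.sub h2
    rw [hasDerivAt_iff_hasFDerivAt]
    apply hasFDerivAt_of_restrictScalars ℝ hre
    ext w
    have hw : (w:ℂ) = w.re • (1:ℂ) + w.im • I := by
      rw [Complex.real_smul, Complex.real_smul, mul_one, Complex.re_add_im]
    have hRw : ∀ v : ℂ, R z w v = w.re • R z 1 v + w.im • R z I v := by
      intro v
      conv_lhs => rw [hw]
      rw [map_add, (R z).map_smul, (R z).map_smul]
      rfl
    simp only [ContinuousLinearMap.coe_restrictScalars', ContinuousLinearMap.coe_comp',
      Function.comp_apply, ContinuousLinearMap.coe_sub', Pi.sub_apply,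
      ContinuousLinearMap.smulRight_apply, ContinuousLinearMap.smulRight_apply,
      ContinuousLinearMap.one_apply, Complex.ofRealCLM_apply, ContinuousLinearMap.apply_apply]
    rw [hRw 1, hRw I, hsymm z I 1, harm' z]
    rw [smul_eq_mul, hf'def]
    simp only [smul_eq_mul]
    push_cast
    conv_lhs => rw [hw]
    rw [Complex.real_smul, Complex.real_smul]
    apply Complex.ext <;> simp <;> ring

lemma exists_primitive (f f' : ℂ → ℂ) (hf'c : Continuous f')
    (hf : ∀ z, HasDerivAt f (f' z) z) :
    ∃ G : ℂ → ℂ, ∀ z, HasDerivAt G (f z) z := by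
  have hfc : Continuous f := by
    have : Differentiable ℂ f := fun z => (hf z).differentiableAt
    exact this.continuous
  refine ⟨fun z => ∫ t in (0:ℝ)..1, z * f (↑t * z), fun z₀ => ?_⟩
  -- compact bounds
  obtain ⟨C1, hC1⟩ := (isCompact_closedBall (0:ℂ) (‖z₀‖+1)).exists_bound_of_continuousOn
    hfc.continuousOn
  obtain ⟨C2, hC2⟩ := (isCompact_closedBall (0:ℂ) (‖z₀‖+1)).exists_bound_of_continuousOn
    hf'c.continuousOn
  set F' : ℂ → ℝ → ℂ := fun x t => f (↑t * x) + x * (f' (↑t * x) * ↑t) with hF'def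
  have hmem : ∀ t : ℝ, t ∈ Set.uIoc (0:ℝ) 1 → ∀ x ∈ ball z₀ 1, ↑t * x ∈ closedBall (0:ℂ) (‖z₀‖+1) := by
    intro t ht x hx
    rw [Set.uIoc_of_le (by norm_num : (0:ℝ) ≤ 1)] at ht
    have hxn : ‖x‖ ≤ ‖z₀‖ + 1 := by
      have := mem_ball_iff_norm.1 hx
      calc ‖x‖ = ‖z₀ + (x - z₀)‖ := by ring_nf
        _ ≤ ‖z₀‖ + ‖x - z₀‖ := norm_add_le _ _
        _ ≤ ‖z₀‖ + 1 := by linarith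
    rw [mem_closedBall_zero_iff, norm_mul, Complex.norm_real, Real.norm_eq_abs,
      abs_of_pos ht.1]
    calc t * ‖x‖ ≤ 1 * ‖x‖ := by
          apply mul_le_mul_of_nonneg_right ht.2 (norm_nonneg _)
      _ = ‖x‖ := one_mul _
      _ ≤ ‖z₀‖ + 1 := hxn
  have hderiv := (intervalIntegral.hasDerivAt_integral_of_dominated_loc_of_deriv_le
    (F := fun x t => x * f (↑t * x)) (F' := F') (x₀ := z₀)
    (bound := fun _ => C1 + (‖z₀‖+1) * (max C2 0 * 1)) (Metric.ball_mem_nhds z₀ one_pos)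
    (Filter.Eventually.of_forall fun x => (Continuous.aestronglyMeasurable (by fun_prop)))
    (Continuous.intervalIntegrable (by fun_prop) 0 1)
    (Continuous.aestronglyMeasurable (μ := volume) (by fun_prop)).restrict
    (Filter.Eventually.of_forall ?_) intervalIntegrable_const
    (Filter.Eventually.of_forall ?_)).2
  · -- evaluate the integral ∫ F' z₀ t
    have hFTC : ∫ t in (0:ℝ)..1, F' z₀ t = f z₀ := by
      have hφ : ∀ t ∈ Set.uIcc (0:ℝ) 1,
          HasDerivAt (fun s : ℝ => (↑s : ℂ) * f (↑s * z₀)) (F' z₀ t) t := by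
        intro t _
        have hre : HasDerivAt (fun s : ℝ => (↑s : ℂ)) 1 t := by
          have h := Complex.ofRealCLM.hasDerivAt (x := t)
          simp at h
          exact h
        have hinner : HasDerivAt (fun s : ℝ => (↑s * z₀ : ℂ)) z₀ t := by
          simpa using hre.mul_const z₀
        have houter : HasDerivAt (fun s : ℝ => f (↑s * z₀)) (z₀ * f' (↑t * z₀)) t := by
          have h := ((hf (↑t * z₀)).hasFDerivAt.restrictScalars ℝ).comp_hasDerivAt t hinner
          simp [Function.comp] at h
          exact h
        have := hre.mul houter
        refine this.congr_deriv ?_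
        rw [hF'def]
        simp only
        ring
      rw [intervalIntegral.integral_eq_sub_of_hasDerivAt hφ
        (Continuous.intervalIntegrable (by fun_prop) 0 1)]
      simp
    rw [hFTC] at hderiv
    exact hderiv
  · -- bound
    intro t ht x hx
    have hKmem := hmem t ht x hx
    have hfb := hC1 _ hKmem
    have hf'b := hC2 _ hKmem
    rw [Set.uIoc_of_le (by norm_num : (0:ℝ) ≤ 1)] at ht
    have hxn : ‖x‖ ≤ ‖z₀‖ + 1 := by
      have := mem_ball_iff_norm.1 hx
      calc ‖x‖ = ‖z₀ + (x - z₀)‖ := by ring_nf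
        _ ≤ ‖z₀‖ + ‖x - z₀‖ := norm_add_le _ _
        _ ≤ ‖z₀‖ + 1 := by linarith
    calc ‖F' x t‖ ≤ ‖f (↑t * x)‖ + ‖x * (f' (↑t * x) * ↑t)‖ := norm_add_le _ _
      _ = ‖f (↑t * x)‖ + ‖x‖ * (‖f' (↑t * x)‖ * |t|) := by
          rw [norm_mul, norm_mul, Complex.norm_real, Real.norm_eq_abs]
      _ ≤ C1 + (‖z₀‖+1) * (max C2 0 * 1) := by
          apply add_le_add hfb
          apply mul_le_mul hxn ?_ (by positivity) (by positivity)
          apply mul_le_mul (le_max_left _ _ |>.trans' hf'b) ?_ (abs_nonneg _) (le_max_right _ _)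
          rw [abs_of_pos ht.1]; exact ht.2
  · -- differentiability in x
    intro t ht x hx
    have hlin : HasDerivAt (fun y : ℂ => ↑t * y) (↑t : ℂ) x := by
      simpa using (hasDerivAt_id x).const_mul (↑t : ℂ)
    have h_in : HasDerivAt (fun y : ℂ => f (↑t * y)) (f' (↑t * x) * ↑t) x := by
      have := (hf (↑t * x)).comp x hlin
      exact this
    have := (hasDerivAt_id x).mul h_in
    refine this.congr_deriv ?_
    rw [hF'def]
    simp only [_root_.id]
    ring

lemma key (u : ℂ → ℝ) (hu : ContDiff ℝ 2 u)
    (harm : ∀ z, fderiv ℝ (fun y => fderiv ℝ u y 1) z 1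
      + fderiv ℝ (fun y => fderiv ℝ u y I) z I = 0) :
    ¬ Integrable (fun z : ℂ => Real.exp (u z)) := by
  intro hint
  obtain ⟨f, f', hf'c, hf, hfval⟩ := exists_holo u hu harm
  obtain ⟨G, hG⟩ := exists_primitive f f' hf'c hf
  -- Re G = u + const
  have hRe : ∀ z, (G z).re = u z + ((G 0).re - u 0) := by
    have hd : ∀ z, HasFDerivAt (fun z => (G z).re - u z) (0 : ℂ →L[ℝ] ℝ) z := by
      intro z
      have hGF : HasFDerivAt G ((ContinuousLinearMap.smulRight (1 : ℂ →L[ℂ] ℂ) (f z))) z :=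
        (hG z).hasFDerivAt
      have hGR : HasFDerivAt (fun z => (G z).re)
          (Complex.reCLM.comp (((ContinuousLinearMap.smulRight (1 : ℂ →L[ℂ] ℂ)
            (f z))).restrictScalars ℝ)) z :=
        Complex.reCLM.hasFDerivAt.comp z (hGF.restrictScalars ℝ)
      have hu' : HasFDerivAt u (fderiv ℝ u z) z :=
        (hu.differentiable (by norm_num) z).hasFDerivAt
      have heq : (Complex.reCLM.comp (((ContinuousLinearMap.smulRight (1 : ℂ →L[ℂ] ℂ)
          (f z))).restrictScalars ℝ)) = fderiv ℝ u z := by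
        ext w
        simp only [ContinuousLinearMap.coe_comp', Function.comp_apply,
          ContinuousLinearMap.coe_restrictScalars', ContinuousLinearMap.smulRight_apply,
          ContinuousLinearMap.one_apply, Complex.reCLM_apply, smul_eq_mul]
        rw [hfval z]
        have hw : (w:ℂ) = w.re • (1:ℂ) + w.im • I := by
          rw [Complex.real_smul, Complex.real_smul, mul_one, Complex.re_add_im]
        have hRw : fderiv ℝ u z w = w.re • fderiv ℝ u z 1 + w.im • fderiv ℝ u z I := by
          conv_lhs => rw [hw]
          rw [map_add, (fderiv ℝ u z).map_smul, (fderiv ℝ u z).map_smul]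
        rw [hRw]
        conv_lhs => rw [hw, Complex.real_smul, Complex.real_smul]
        simp only [smul_eq_mul]
        set a := fderiv ℝ u z 1
        set b := fderiv ℝ u z I
        push_cast
        simp [Complex.mul_re, Complex.add_re, Complex.sub_re]
      have := hGR.sub hu'
      rw [heq, sub_self] at this
      exact this
    intro z
    have h1 : Differentiable ℝ (fun z => (G z).re - u z) := fun y => (hd y).differentiableAt
    have := is_const_of_fderiv_eq_zero h1 (fun y => (hd y).fderiv) z 0
    linarith [this]
  -- the entire function exp(G)
  set g : ℂ → ℂ := fun z => Complex.exp (G z) with hgdef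
  have hGdiff : Differentiable ℂ G := fun z => (hG z).differentiableAt
  have hgdiff : Differentiable ℂ g := hGdiff.cexp
  have hnorm : ∀ z, ‖g z‖ = Real.exp ((G 0).re - u 0) * Real.exp (u z) := by
    intro z
    rw [hgdef]
    simp only
    rw [Complex.norm_exp, hRe z, ← Real.exp_add]
    ring_nf
  have hgi : Integrable fun z => ‖g z‖ := by
    have := hint.const_mul (Real.exp ((G 0).re - u 0))
    apply this.congr
    exact Filter.Eventually.of_forall (fun z => (hnorm z).symm)
  have h0 := entire_zero g hgdiff hgi
  exact Complex.exp_ne_zero (G 0) h0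

end Aux

open Complex ContinuousLinearMap in
theorem stmt11 :
    ¬ ∃ v : E2 → ℝ, ContDiff ℝ 2 v ∧ (∀ x : E2, laplacian2 v x = 0) ∧
      Integrable (fun x : E2 => Real.exp (v x)) := by
  rintro ⟨v, hv, hharm, hint⟩
  set b := Complex.orthonormalBasisOneI
  set eL : ℂ →L[ℝ] E2 :=
    (b.repr.toContinuousLinearEquiv : ℂ ≃L[ℝ] E2).toContinuousLinearMap with heLdef
  have heL : ⇑eL = ⇑b.repr := rfl
  have he1 : eL 1 = EuclideanSpace.single (0 : Fin 2) (1:ℝ) := by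
    rw [heL]
    ext i
    fin_cases i <;> simp [b, Complex.orthonormalBasisOneI_repr_apply, EuclideanSpace.single_apply]
  have heI : eL I = EuclideanSpace.single (1 : Fin 2) (1:ℝ) := by
    rw [heL]
    ext i
    fin_cases i <;> simp [b, Complex.orthonormalBasisOneI_repr_apply, EuclideanSpace.single_apply]
  set u : ℂ → ℝ := fun z => v (eL z) with hudef
  have hu : ContDiff ℝ 2 u := hv.comp (eL.contDiff)
  have hvd : Differentiable ℝ v := hv.differentiable (by norm_num)
  -- first derivative transport
  have hder : ∀ z, HasFDerivAt u ((fderiv ℝ v (eL z)).comp eL) z := by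
    intro z
    exact ((hvd (eL z)).hasFDerivAt).comp z (eL.hasFDerivAt)
  -- second derivative transport
  have hsec : ∀ (w : ℂ) (z : ℂ), fderiv ℝ (fun y => fderiv ℝ u y w) z w
      = fderiv ℝ (fun x => fderiv ℝ v x (eL w)) (eL z) (eL w) := by
    intro w z
    have hA : (fun y => fderiv ℝ u y w) = (fun x => fderiv ℝ v x (eL w)) ∘ ⇑eL := by
      funext y
      rw [(hder y).fderiv]
      rfl
    have hdv : ContDiff ℝ 1 (fderiv ℝ v) := hv.fderiv_right (by norm_num)
    have hB : HasFDerivAt (fun x => fderiv ℝ v x (eL w))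
        ((ContinuousLinearMap.apply ℝ ℝ (eL w)).comp (fderiv ℝ (fderiv ℝ v) (eL z))) (eL z) :=
      (ContinuousLinearMap.apply ℝ ℝ (eL w)).hasFDerivAt.comp (eL z)
        ((hdv.differentiable one_ne_zero (eL z)).hasFDerivAt)
    have hC : HasFDerivAt ((fun x => fderiv ℝ v x (eL w)) ∘ ⇑eL)
        (((ContinuousLinearMap.apply ℝ ℝ (eL w)).comp (fderiv ℝ (fderiv ℝ v) (eL z))).comp eL)
        z := hB.comp z eL.hasFDerivAt
    rw [hA, hC.fderiv, hB.fderiv]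
    rfl
  have harm : ∀ z, fderiv ℝ (fun y => fderiv ℝ u y 1) z 1
      + fderiv ℝ (fun y => fderiv ℝ u y I) z I = 0 := by
    intro z
    rw [hsec 1 z, hsec I z, he1, heI]
    have := hharm (eL z)
    rw [laplacian2, Fin.sum_univ_two] at this
    exact this
  -- integrability transport
  have hintu : Integrable (fun z : ℂ => Real.exp (u z)) := by
    have hmp : MeasurePreserving ⇑b.repr volume volume := b.measurePreserving_repr
    have hemb : MeasurableEmbedding ⇑b.repr :=
      b.repr.toHomeomorph.measurableEmbedding
    exact (hmp.integrable_comp_emb hemb).2 hint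
  exact key u hu harm hintu
end
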